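/- There are no balanced super-spiders: for all integers α ≥ 3 and β ≥ 1, the balanced spider T_{α,β} satisfies th₊(T_{α,β}) ≤ th₊(P_{αβ+1}). -/

import Mathlib

open SimpleGraph

/-- `v` PSD-forces `w` given blue set `B`: `v` is blue, adjacent to the white vertex `w`,
and `w` is the only white neighbor of `v` in the component of `G - B` containing `w`. -/
def psdForces {V : Type*} (G : SimpleGraph V) (B : Set V) (v w : V) : Prop :=
  v ∈ B ∧ G.Adj v w ∧ ∃ hw : w ∉ B,
    ∀ (u : V) (hu : u ∉ B), G.Adj v u →
      (G.induce {x | x ∉ B}).Reachable ⟨u, hu⟩ ⟨w, hw⟩ → u = w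

/-- One time-step of PSD forcing: all forceable white vertices become blue simultaneously. -/
def psdStep {V : Type*} (G : SimpleGraph V) (B : Set V) : Set V :=
  B ∪ {w | ∃ v, psdForces G B v w}

/-- `B` is a PSD-forcing set of `G` if iterating the PSD color change rule colors all of `V`. -/
def IsPSDForcing {V : Type*} (G : SimpleGraph V) (B : Set V) : Prop :=
  ∃ t, (psdStep G)^[t] B = Set.univ

/-- The PSD-propagation time of `B` in `G`. -/
noncomputable def psdPt {V : Type*} (G : SimpleGraph V) (B : Set V) : ℕ :=
  sInf {t | (psdStep G)^[t] B = Set.univ}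

/-- The PSD-throttling number of `G`. -/
noncomputable def psdTh {V : Type*} (G : SimpleGraph V) : ℕ :=
  sInf {k | ∃ B : Finset V, IsPSDForcing G ↑B ∧ k = B.card + psdPt G ↑B}

/-- The weighted PSD-throttling number of `(G, w)`. -/
noncomputable def psdThW {V : Type*} (G : SimpleGraph V) (w : V → ℕ) : ℕ :=
  sInf {k | ∃ B : Finset V, IsPSDForcing G ↑B ∧ k = (∑ x ∈ B, w x) + psdPt G ↑B}

/-- The spider `S(l₀, …, l_{k-1})`: a center vertex `none` adjacent to the first vertex
of each of `k` disjoint paths, the `i`-th of order `l i`. -/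
def spider (k : ℕ) (l : Fin k → ℕ) : SimpleGraph (Option ((i : Fin k) × Fin (l i))) :=
  SimpleGraph.fromRel (fun x y =>
    (∃ (i : Fin k) (j : Fin (l i)), (j : ℕ) = 0 ∧ x = none ∧ y = some ⟨i, j⟩) ∨
    (∃ (i : Fin k) (j j' : Fin (l i)), (j' : ℕ) = (j : ℕ) + 1 ∧
      x = some ⟨i, j⟩ ∧ y = some ⟨i, j'⟩))

/-- The balanced spider `T_{α,β}` with `α` legs each of order `β`. -/
abbrev balancedSpider (α β : ℕ) : SimpleGraph (Option ((_ : Fin α) × Fin β)) :=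
  spider α (fun _ => β)


variable {α β : ℕ}

lemma bs_adj_center_leg (i : Fin α) (j : Fin β) (hj : (j : ℕ) = 0) :
    (balancedSpider α β).Adj none (some ⟨i, j⟩) := by
  rw [balancedSpider, spider, fromRel_adj]
  exact ⟨by simp, Or.inl (Or.inl ⟨i, j, hj, rfl, rfl⟩)⟩

lemma bs_adj_succ (i : Fin α) (j j' : Fin β) (h : (j' : ℕ) = (j : ℕ) + 1) :
    (balancedSpider α β).Adj (some ⟨i, j⟩) (some ⟨i, j'⟩) := by
  rw [balancedSpider, spider, fromRel_adj]
  refine ⟨by simp; intro h'; omega, Or.inl (Or.inr ⟨i, j, j', h, rfl, rfl⟩)⟩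

lemma bs_adj_from_center {z} (h : (balancedSpider α β).Adj none z) :
    ∃ (i : Fin α) (j : Fin β), (j : ℕ) = 0 ∧ z = some ⟨i, j⟩ := by
  rw [balancedSpider, spider, fromRel_adj] at h
  obtain ⟨-, h | h⟩ := h
  · rcases h with h | h
    · obtain ⟨i, j, hj, -, rfl⟩ := h; exact ⟨i, j, hj, rfl⟩
    · obtain ⟨i, j, j', -, h, -⟩ := h; exact absurd h (by simp)
  · rcases h with h | h
    · obtain ⟨i, j, hj, h, h2⟩ := h; exact absurd h2 (by simp)
    · obtain ⟨i, j, j', -, -, h⟩ := h; exact absurd h (by simp)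

lemma bs_adj_from_leg {i : Fin α} {j : Fin β} {z}
    (h : (balancedSpider α β).Adj (some ⟨i, j⟩) z) :
    (z = none ∧ (j : ℕ) = 0) ∨
    (∃ j' : Fin β, ((j' : ℕ) = (j : ℕ) + 1 ∨ (j : ℕ) = (j' : ℕ) + 1) ∧ z = some ⟨i, j'⟩) := by
  rw [balancedSpider, spider, fromRel_adj] at h
  obtain ⟨-, h | h⟩ := h
  · rcases h with h | h
    · obtain ⟨_, _, _, h, -⟩ := h; exact absurd h (by simp)
    · obtain ⟨i', j1, j2, hj, h1, rfl⟩ := h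
      rw [Option.some.injEq, Sigma.mk.inj_iff] at h1
      obtain ⟨rfl, h1⟩ := h1
      refine Or.inr ⟨j2, Or.inl ?_, rfl⟩
      cases eq_of_heq h1; omega
  · rcases h with h | h
    · obtain ⟨i', j1, hj, rfl, h2⟩ := h
      rw [Option.some.injEq, Sigma.mk.inj_iff] at h2
      obtain ⟨rfl, h2⟩ := h2
      exact Or.inl ⟨rfl, by cases eq_of_heq h2; exact hj⟩
    · obtain ⟨i', j1, j2, hj, rfl, h2⟩ := h
      rw [Option.some.injEq, Sigma.mk.inj_iff] at h2
      obtain ⟨rfl, h2⟩ := h2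
      refine Or.inr ⟨j1, Or.inr ?_, rfl⟩
      cases eq_of_heq h2; omega
lemma reach_const {V' : Type*} {H : SimpleGraph V'} (f : V' → ℕ)
    (hf : ∀ a b, H.Adj a b → f a = f b) {x y : V'} (h : H.Reachable x y) : f x = f y := by
  obtain ⟨p⟩ := h
  induction p with
  | nil => rfl
  | cons h p ih => exact (hf _ _ h).trans ih



lemma some_mk_eq {i : Fin α} {j j' : Fin β} (h : (j : ℕ) = (j' : ℕ)) :
    (some ⟨i, j⟩ : Option ((_ : Fin α) × Fin β)) = some ⟨i, j'⟩ := by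
  have : j = j' := Fin.val_injective h
  rw [this]

lemma some_mk_eq2 {i i' : Fin α} {j j' : Fin β} (h1 : i = i') (h2 : (j : ℕ) = (j' : ℕ)) :
    (some ⟨i, j⟩ : Option ((_ : Fin α) × Fin β)) = some ⟨i', j'⟩ := by
  cases h1; exact some_mk_eq h2

/-- In the spider, any blue vertex forces each of its white neighbors. -/
lemma bs_forces {X : Set (Option ((_ : Fin α) × Fin β))} {v w}
    (hv : v ∈ X) (hadj : (balancedSpider α β).Adj v w) (hw : w ∉ X) :
    psdForces (balancedSpider α β) X v w := by
  refine ⟨hv, hadj, hw, fun u hu hadj' hreach => ?_⟩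
  by_contra hne
  rcases v with - | ⟨i, j⟩
  · -- v = center
    obtain ⟨iu, ju, hju, rfl⟩ := bs_adj_from_center hadj'
    obtain ⟨iw, jw, hjw, rfl⟩ := bs_adj_from_center hadj
    let f : Option ((_ : Fin α) × Fin β) → ℕ := fun z =>
      match z with
      | none => 0
      | some ⟨i', _⟩ => (i' : ℕ) + 1
    have hinv : ∀ a b : {x // x ∈ {x | x ∉ X}},
        ((balancedSpider α β).induce {x | x ∉ X}).Adj a b → f a.1 = f b.1 := by
      rintro ⟨a, ha⟩ ⟨b, hb⟩ hab
      simp only [comap_adj, Function.Embedding.coe_subtype] at hab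
      rcases a with - | ⟨ia, ja⟩
      · exact absurd hv ha
      rcases b with - | ⟨ib, jb⟩
      · exact absurd hv hb
      rcases bs_adj_from_leg hab with ⟨h, -⟩ | ⟨j', -, h⟩
      · exact absurd h (by simp)
      · rw [Option.some.injEq, Sigma.mk.inj_iff] at h
        obtain ⟨h1, -⟩ := h
        show (ia : ℕ) + 1 = (ib : ℕ) + 1
        rw [h1]
    have hfe : f (some ⟨iu, ju⟩) = f (some ⟨iw, jw⟩) :=
      reach_const (fun z : {x // x ∈ {x | x ∉ X}} => f z.1) hinv hreach
    have h' : (iu : ℕ) + 1 = (iw : ℕ) + 1 := hfe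
    have : iu = iw := Fin.val_injective (by omega)
    subst this
    exact hne (some_mk_eq (by omega))
  · -- v = some ⟨i, j⟩
    let f : Option ((_ : Fin α) × Fin β) → ℕ := fun z =>
      match z with
      | none => 0
      | some ⟨i', j'⟩ => if i' = i ∧ (j : ℕ) < (j' : ℕ) then 1 else 0
    have hinv : ∀ a b : {x // x ∈ {x | x ∉ X}},
        ((balancedSpider α β).induce {x | x ∉ X}).Adj a b → f a.1 = f b.1 := by
      rintro ⟨a, ha⟩ ⟨b, hb⟩ hab
      simp only [comap_adj, Function.Embedding.coe_subtype] at hab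
      rcases a with - | ⟨ia, ja⟩
      · obtain ⟨ib, jb, hjb, rfl⟩ := bs_adj_from_center hab
        show 0 = ite _ 1 0
        rw [if_neg]; rintro ⟨-, h⟩; omega
      rcases b with - | ⟨ib, jb⟩
      · rcases bs_adj_from_leg hab with ⟨-, hja⟩ | ⟨j', -, h⟩
        · show ite _ 1 0 = 0
          rw [if_neg]; rintro ⟨-, h⟩; omega
        · exact absurd h (by simp)
      · rcases bs_adj_from_leg hab with ⟨h, -⟩ | ⟨j', hj', h⟩
        · exact absurd h (by simp)
        · rw [Option.some.injEq, Sigma.mk.inj_iff] at h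
          have e1 : ib = ia := h.1
          have e2 : jb = j' := eq_of_heq h.2
          show (ite (ia = i ∧ _) 1 0 : ℕ) = ite (ib = i ∧ _) 1 0
          rw [e1]
          by_cases hia : ia = i
          · have h1 : (ja : ℕ) ≠ (j : ℕ) := fun h =>
              ha (by rw [some_mk_eq2 hia h]; exact hv)
            have h2' : (jb : ℕ) ≠ (j : ℕ) := fun h =>
              hb (by rw [e1, some_mk_eq2 hia h]; exact hv)
            have e3 : (jb : ℕ) = (j' : ℕ) := by rw [e2]
            by_cases hlt : (j : ℕ) < (ja : ℕ)
            · rw [if_pos ⟨hia, hlt⟩, if_pos ⟨hia, by omega⟩]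
            · rw [if_neg (by rintro ⟨-, h⟩; omega), if_neg (by rintro ⟨-, h⟩; omega)]
          · rw [if_neg (by rintro ⟨h, -⟩; exact hia h), if_neg (by rintro ⟨h, -⟩; exact hia h)]
    have hfe : f u = f w := reach_const (fun z => f z.1) hinv hreach
    have fval : ∀ z, (balancedSpider α β).Adj (some ⟨i, j⟩) z →
        (z = none ∧ (j : ℕ) = 0) ∨
        ∃ j' : Fin β, z = some ⟨i, j'⟩ ∧
          (((j' : ℕ) = (j : ℕ) + 1 ∧ f z = 1) ∨ ((j : ℕ) = (j' : ℕ) + 1 ∧ f z = 0)) := by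
      intro z hz
      rcases bs_adj_from_leg hz with h | ⟨j', hj', rfl⟩
      · exact Or.inl h
      · refine Or.inr ⟨j', rfl, ?_⟩
        rcases hj' with h | h
        · exact Or.inl ⟨h, by show ite _ 1 0 = 1; rw [if_pos ⟨rfl, by omega⟩]⟩
        · exact Or.inr ⟨h, by show ite _ 1 0 = 0; rw [if_neg (by rintro ⟨-, hh⟩; omega)]⟩
    have fnone : f none = 0 := rfl
    rcases fval u hadj' with ⟨rfl, hj0⟩ | ⟨ju, rfl, hju⟩ <;>
      rcases fval w hadj with ⟨rfl, hj0'⟩ | ⟨jw, rfl, hjw⟩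
    · exact hne rfl
    · rcases hjw with ⟨h1, h2⟩ | ⟨h1, h2⟩
      · rw [fnone, h2] at hfe; omega
      · omega
    · rcases hju with ⟨h1, h2⟩ | ⟨h1, h2⟩
      · rw [fnone, h2] at hfe; omega
      · omega
    · rcases hju with ⟨h1, h2⟩ | ⟨h1, h2⟩ <;> rcases hjw with ⟨h1', h2'⟩ | ⟨h1', h2'⟩
      · exact hne (some_mk_eq (by omega))
      · rw [h2, h2'] at hfe; omega
      · rw [h2, h2'] at hfe; omega
      · exact hne (some_mk_eq (by omega))

def graphGrow {V : Type*} (G : SimpleGraph V) (X : Set V) : Set V :=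
  X ∪ {w | ∃ v ∈ X, G.Adj v w}

lemma subset_graphGrow {V : Type*} (G : SimpleGraph V) (X : Set V) : X ⊆ graphGrow G X :=
  Set.subset_union_left

lemma subset_psdStep {V : Type*} (G : SimpleGraph V) (X : Set V) : X ⊆ psdStep G X :=
  Set.subset_union_left

lemma graphGrow_mono {V : Type*} (G : SimpleGraph V) {X Y : Set V} (h : X ⊆ Y) :
    graphGrow G X ⊆ graphGrow G Y := by
  rintro x (hx | ⟨v, hv, hadj⟩)
  · exact Or.inl (h hx)
  · exact Or.inr ⟨v, h hv, hadj⟩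

lemma bs_grow_subset_step (X : Set (Option ((_ : Fin α) × Fin β))) :
    graphGrow (balancedSpider α β) X ⊆ psdStep (balancedSpider α β) X := by
  rintro w (hw | ⟨v, hv, hadj⟩)
  · exact Or.inl hw
  · by_cases hwX : w ∈ X
    · exact Or.inl hwX
    · exact Or.inr ⟨v, bs_forces hv hadj hwX⟩

lemma bs_iter_grow_subset (X : Set (Option ((_ : Fin α) × Fin β))) (n : ℕ) :
    (graphGrow (balancedSpider α β))^[n] X ⊆ (psdStep (balancedSpider α β))^[n] X := by
  induction n with
  | zero => exact le_refl _
  | succ n ih =>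
      rw [Function.iterate_succ_apply', Function.iterate_succ_apply']
      exact (graphGrow_mono _ ih).trans (bs_grow_subset_step _)

lemma grow_iter_le {V : Type*} (G : SimpleGraph V) (X : Set V) {m n : ℕ} (h : m ≤ n) :
    (graphGrow G)^[m] X ⊆ (graphGrow G)^[n] X := by
  induction n with
  | zero => rw [Nat.le_zero.mp h]
  | succ n ih =>
      rcases Nat.lt_or_ge m (n+1) with h' | h'
      · rw [Function.iterate_succ_apply']
        exact (ih (by omega)).trans (subset_graphGrow _ _)
      · rw [Nat.le_antisymm h h']

lemma grow_adj_step {V : Type*} (G : SimpleGraph V) {X : Set V} {x y : V} {n : ℕ}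
    (hx : x ∈ (graphGrow G)^[n] X) (hadj : G.Adj x y) : y ∈ (graphGrow G)^[n+1] X := by
  rw [Function.iterate_succ_apply']
  exact Or.inr ⟨x, hx, hadj⟩

lemma bs_center_walk (i : Fin α) {X : Set (Option ((_ : Fin α) × Fin β))} (hc : none ∈ X) :
    ∀ (d : ℕ) (j : Fin β), (j : ℕ) < d → some ⟨i, j⟩ ∈ (graphGrow (balancedSpider α β))^[d] X := by
  intro d
  induction d with
  | zero => intro j h; omega
  | succ d ih =>
      intro j hj
      rcases Nat.eq_zero_or_pos (j : ℕ) with h0 | h0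
      · exact grow_adj_step _ (grow_iter_le _ _ (Nat.zero_le d) hc) (bs_adj_center_leg i j h0)
      · have hjd : (j : ℕ) - 1 < (β : ℕ) := by omega
        have := ih ⟨(j : ℕ) - 1, by omega⟩ (by simp; omega)
        exact grow_adj_step _ this (bs_adj_succ i _ j (by simp; omega))

lemma bs_leg_walk (i : Fin α) (q : Fin β) {X : Set (Option ((_ : Fin α) × Fin β))}
    (hq : (some ⟨i, q⟩ : Option ((_ : Fin α) × Fin β)) ∈ X) :
    ∀ (d : ℕ) (j : Fin β), (j : ℕ) ≤ (q : ℕ) + d → (q : ℕ) ≤ (j : ℕ) + d →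
      some ⟨i, j⟩ ∈ (graphGrow (balancedSpider α β))^[d] X := by
  intro d
  induction d with
  | zero =>
      intro j h1 h2
      have : j = q := Fin.val_injective (by omega)
      subst this; exact hq
  | succ d ih =>
      intro j h1 h2
      rcases Nat.lt_trichotomy (j : ℕ) (q : ℕ) with hlt | heq | hgt
      · have hj2 : (j : ℕ) + 1 < (β : ℕ) := by have := q.2; omega
        have := ih ⟨(j : ℕ) + 1, hj2⟩ (by simp; omega) (by simp; omega)
        exact grow_adj_step _ this ((bs_adj_succ i j _ (by simp)).symm)
      · have : j = q := Fin.val_injective heq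
        subst this
        exact grow_iter_le _ _ (Nat.zero_le _) hq
      · have hj2 : (j : ℕ) - 1 < (β : ℕ) := by have := j.2; omega
        have := ih ⟨(j : ℕ) - 1, hj2⟩ (by simp; omega) (by simp; omega)
        exact grow_adj_step _ this (bs_adj_succ i _ j (by simp; omega))
lemma spider_th_le (α β : ℕ) (hβ : 1 ≤ β) (c s : ℕ) (hcov : β ≤ s*(2*c+1)+c) :
    psdTh (balancedSpider α β) ≤ 1 + α*c + s := by
  classical
  set pos : Fin c → Fin β := fun m =>
    ⟨min (2*s + (m : ℕ)*(2*s+1)) (β-1), by omega⟩ with hpos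
  set B : Finset (Option ((_ : Fin α) × Fin β)) :=
    insert none ((Finset.univ : Finset (Fin α × Fin c)).image
      (fun p => some ⟨p.1, pos p.2⟩)) with hB
  have hnoneB : (none : Option ((_ : Fin α) × Fin β)) ∈ (B : Set _) := by
    simp [hB]
  have hqB : ∀ (i : Fin α) (m : Fin c), (some ⟨i, pos m⟩ : Option ((_ : Fin α) × Fin β)) ∈ (B : Set _) := by
    intro i m
    simp only [hB, Finset.coe_insert, Set.mem_insert_iff, Finset.coe_image]
    exact Or.inr ⟨(i, m), by simp⟩
  have huniv : (graphGrow (balancedSpider α β))^[s] (B : Set _) = Set.univ := by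
    rw [Set.eq_univ_iff_forall]
    intro x
    rcases x with - | ⟨i, j⟩
    · exact grow_iter_le _ _ (Nat.zero_le s) hnoneB
    · rcases Nat.lt_or_ge (j : ℕ) s with hj | hj
      · exact bs_center_walk i hnoneB s j hj
      · have hs1 : 0 < 2*s+1 := by omega
        have hjb : (j : ℕ) < β := j.2
        have e1 : s*(2*c+1) = 2*(s*c)+s := by ring
        have e2 : c*(2*s+1) = 2*(s*c)+c := by ring
        have hmc : ((j : ℕ) - s) / (2*s+1) < c := by
          rw [Nat.div_lt_iff_lt_mul hs1]
          omega
        set m : Fin c := ⟨((j : ℕ) - s) / (2*s+1), hmc⟩ with hm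
        have hdm := Nat.div_add_mod ((j : ℕ) - s) (2*s+1)
        have hmod := Nat.mod_lt ((j : ℕ) - s) hs1
        have hcomm : (((j : ℕ) - s)/(2*s+1))*(2*s+1) = (2*s+1)*(((j : ℕ) - s)/(2*s+1)) :=
          Nat.mul_comm _ _
        have hposv : (pos m : ℕ) = min (2*s + (((j : ℕ) - s)/(2*s+1))*(2*s+1)) (β-1) := rfl
        have hq1 : (j : ℕ) ≤ (pos m : ℕ) + s := by
          rw [hposv]; omega
        have hq2 : (pos m : ℕ) ≤ (j : ℕ) + s := by
          rw [hposv]; omega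
        exact bs_leg_walk i (pos m) (hqB i m) s j hq1 hq2
  have hstep : (psdStep (balancedSpider α β))^[s] (B : Set _) = Set.univ :=
    Set.eq_univ_of_univ_subset (huniv ▸ bs_iter_grow_subset _ s)
  have hforce : IsPSDForcing (balancedSpider α β) (B : Set _) := ⟨s, hstep⟩
  have hpt : psdPt (balancedSpider α β) (B : Set _) ≤ s := Nat.sInf_le hstep
  have hcard : B.card ≤ 1 + α*c := by
    refine (Finset.card_insert_le _ _).trans ?_
    have := Finset.card_image_le (s := (Finset.univ : Finset (Fin α × Fin c)))
      (f := fun p => (some ⟨p.1, pos p.2⟩ : Option ((_ : Fin α) × Fin β)))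
    simp only [Finset.card_univ, Fintype.card_prod, Fintype.card_fin] at this
    omega
  calc psdTh (balancedSpider α β) ≤ B.card + psdPt (balancedSpider α β) (B : Set _) :=
        Nat.sInf_le ⟨B, hforce, rfl⟩
    _ ≤ 1 + α*c + s := by omega

lemma psdStep_subset_grow {V : Type*} (G : SimpleGraph V) (X : Set V) :
    psdStep G X ⊆ graphGrow G X := by
  rintro w (hw | ⟨v, hvB, hadj, -⟩)
  · exact Or.inl hw
  · exact Or.inr ⟨v, hvB, hadj⟩

lemma path_iter_ball {n : ℕ} (Bp : Finset (Fin n)) (T : ℕ) :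
    ∀ x : Fin n, x ∈ (psdStep (pathGraph n))^[T] (Bp : Set (Fin n)) →
      ∃ b ∈ Bp, (x : ℕ) ≤ (b : ℕ) + T ∧ (b : ℕ) ≤ (x : ℕ) + T := by
  induction T with
  | zero => exact fun x hx => ⟨x, hx, by omega, by omega⟩
  | succ T ih =>
      intro x hx
      rw [Function.iterate_succ_apply'] at hx
      rcases psdStep_subset_grow _ _ hx with hx' | ⟨v, hv, hadj⟩
      · obtain ⟨b, hb, h1, h2⟩ := ih x hx'
        exact ⟨b, hb, by omega, by omega⟩
      · obtain ⟨b, hb, h1, h2⟩ := ih v hv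
        rcases pathGraph_adj.mp hadj with h | h
        · exact ⟨b, hb, by omega, by omega⟩
        · exact ⟨b, hb, by omega, by omega⟩

lemma path_count {n : ℕ} (Bp : Finset (Fin n)) (T : ℕ)
    (huniv : (psdStep (pathGraph n))^[T] (Bp : Set (Fin n)) = Set.univ) :
    n ≤ Bp.card * (2*T+1) := by
  classical
  have hsub : (Finset.univ : Finset (Fin n)) ⊆
      Bp.biUnion (fun b => Finset.univ.filter
        (fun x : Fin n => (x : ℕ) ≤ (b : ℕ) + T ∧ (b : ℕ) ≤ (x : ℕ) + T)) := by
    intro x _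
    obtain ⟨b, hb, h1, h2⟩ := path_iter_ball Bp T x (huniv ▸ Set.mem_univ x)
    exact Finset.mem_biUnion.mpr ⟨b, hb, Finset.mem_filter.mpr ⟨Finset.mem_univ x, h1, h2⟩⟩
  have hcard : ∀ b : Fin n, (Finset.univ.filter
      (fun x : Fin n => (x : ℕ) ≤ (b : ℕ) + T ∧ (b : ℕ) ≤ (x : ℕ) + T)).card ≤ 2*T+1 := by
    intro b
    have := Finset.card_le_card_of_injOn
      (s := Finset.univ.filter
        (fun x : Fin n => (x : ℕ) ≤ (b : ℕ) + T ∧ (b : ℕ) ≤ (x : ℕ) + T))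
      (f := fun x : Fin n => (x : ℕ))
      (t := Finset.Icc ((b : ℕ) - T) ((b : ℕ) + T))
      (fun x hx => by
        rw [Finset.mem_coe, Finset.mem_filter] at hx
        show (x : ℕ) ∈ Finset.Icc ((b : ℕ) - T) ((b : ℕ) + T)
        rw [Finset.mem_Icc]
        omega)
      (fun x _ y _ h => Fin.val_injective h)
    rw [Nat.card_Icc] at this
    omega
  calc n = (Finset.univ : Finset (Fin n)).card := by simp
    _ ≤ _ := Finset.card_le_card hsub
    _ ≤ ∑ b ∈ Bp, (Finset.univ.filter
        (fun x : Fin n => (x : ℕ) ≤ (b : ℕ) + T ∧ (b : ℕ) ≤ (x : ℕ) + T)).card :=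
        Finset.card_biUnion_le
    _ ≤ ∑ _b ∈ Bp, (2*T+1) := Finset.sum_le_sum (fun b _ => hcard b)
    _ = Bp.card * (2*T+1) := by rw [Finset.sum_const, smul_eq_mul]


private lemma lemH (a m t : ℤ) (ha : 3 ≤ a) (hm1 : 2 ≤ m) (hm2 : m ≤ a) (ht : 0 ≤ t)
    (hR : 0 ≤ 2*m*t + m - a*m - a*t - 1) :
    0 ≤ 2*m^2 - 5*m + 3 + t*(a-2) + a*(3-2*m) := by
  have h2m : a + 1 ≤ 2*m := by nlinarith
  rcases eq_or_lt_of_le ha with h3 | h4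
  · subst h3
    have hm3 : m ≤ 3 := by omega
    interval_cases m <;> omega
  · have ha4 : 4 ≤ a := h4
    have hK : 0 ≤ (2*m^2-5*m+3+3*a-2*a*m)*(2*m-a) + (a-2)*(m*(a-1)+1) := by
      nlinarith [mul_nonneg (sub_nonneg.2 hm1) (sub_nonneg.2 hm2),
        mul_nonneg (mul_nonneg (sub_nonneg.2 hm1) (sub_nonneg.2 hm2)) (by linarith : (0:ℤ) ≤ 2*m-a-1),
        mul_nonneg (mul_nonneg (sub_nonneg.2 hm1) (sub_nonneg.2 hm1)) (sub_nonneg.2 hm2),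
        mul_nonneg (mul_nonneg (sub_nonneg.2 hm2) (sub_nonneg.2 hm2)) (by linarith : (0:ℤ) ≤ m-2),
        mul_nonneg (sub_nonneg.2 ha4) (by linarith : (0:ℤ) ≤ 2*m-a-1),
        mul_nonneg (mul_nonneg (sub_nonneg.2 ha4) (sub_nonneg.2 hm2)) (by linarith : (0:ℤ) ≤ 2*m-a-1)]
    have hHt : 0 ≤ (2*m^2-5*m+3+t*(a-2)+a*(3-2*m))*(2*m-a) := by
      nlinarith [hK, mul_nonneg (sub_nonneg.2 (by linarith : (2:ℤ) ≤ a)) hR]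
    nlinarith [hHt, h2m]

private lemma lemKeyZ (a b c m t : ℤ) (ha : 3 ≤ a) (hm1 : 1 ≤ m) (hm2 : m ≤ a)
    (hc : 0 ≤ c) (ht : 0 ≤ t)
    (hmain : a*b + 1 ≤ (a*c+m)*(2*t+1))
    (hA : (m+t-1)*(2*c+1) + c + 1 ≤ b) :
    a + 1 ≤ m + t ∧ b ≤ (m+t-1-a)*(2*c+3) + c + 1 := by
  have hA' : a*((m+t-1)*(2*c+1)+c+1) ≤ a*b := by
    apply mul_le_mul_of_nonneg_left hA (by linarith)
  have star : 2*a*c*(m-1) + a*(m+t) + 1 ≤ m*(2*t+1) := by nlinarith [hA']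
  have hcm : 0 ≤ 2*a*c*(m-1) :=
    mul_nonneg (mul_nonneg (by linarith) hc) (by linarith)
  have hred : a*(m+t) + 1 ≤ m*(2*t+1) := by linarith
  have hm2' : 2 ≤ m := by nlinarith [mul_le_mul_of_nonneg_right ha ht]
  have hR : 0 ≤ 2*m*t + m - a*m - a*t - 1 := by linarith
  have hH := lemH a m t ha hm2' hm2 ht hR
  have part1 : a + 1 ≤ m + t := by
    nlinarith [hcm, sq_nonneg (m-1), sq_nonneg (a-m), mul_nonneg ht (sub_nonneg.2 hm1)]
  have h5 : 0 ≤ (a+1-m)*((2*m*t + m - a*m - a*t - 1) - 2*a*c*(m-1)) :=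
    mul_nonneg (by linarith) (by linarith)
  have h6 : 0 ≤ a*(2*m^2 - 5*m + 3 + t*(a-2) + a*(3-2*m)) :=
    mul_nonneg (by linarith) hH
  have hmF : 0 ≤ (m-1) * (2*a*c*m+3*a*m+3*a*t-2*m*t-m-(2*c+3)*(a+a*a)+a+1) := by
    nlinarith [h5, h6]
  have hF : 0 ≤ 2*a*c*m+3*a*m+3*a*t-2*m*t-m-(2*c+3)*(a+a*a)+a+1 := by
    nlinarith [hmF, hm2']
  refine ⟨part1, ?_⟩
  have hab : a*b ≤ a*((m+t-1-a)*(2*c+3)+c+1) := by nlinarith [hF]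
  exact le_of_mul_le_mul_left hab (by linarith)

lemma lemArithNat (a b k t : ℕ) (ha : 3 ≤ a) (hb : 1 ≤ b) (hk : 1 ≤ k)
    (hmain : a*b+1 ≤ k*(2*t+1)) :
    ∃ c s : ℕ, b ≤ s*(2*c+1)+c ∧ s+1+a*c ≤ k+t := by
  obtain ⟨c0, r, hdm, hr⟩ : ∃ q r, k - 1 = a*q + r ∧ r < a :=
    ⟨(k-1)/a, (k-1)%a, (Nat.div_add_mod (k-1) a).symm, Nat.mod_lt _ (by omega)⟩
  set m := r + 1 with hmdef
  have hm1 : 1 ≤ m := by omega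
  have hm2 : m ≤ a := hr
  have hkeq : k = a*c0 + m := by omega
  by_cases hA : b ≤ (m-1+t)*(2*c0+1)+c0
  · exact ⟨c0, m-1+t, hA, by omega⟩
  · push_neg at hA
    have hA2 : (m-1+t)*(2*c0+1)+c0+1 ≤ b := hA
    have hmainZ : (a:ℤ)*b+1 ≤ ((a:ℤ)*c0+m)*(2*t+1) := by
      have hk' : ((a:ℤ)*c0+m) = (k:ℤ) := by exact_mod_cast hkeq.symm
      rw [hk']
      exact_mod_cast hmain
    have hA2Z : ((m:ℤ)+t-1)*(2*c0+1)+c0+1 ≤ b := by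
      have e : ((m-1+t : ℕ):ℤ) = (m:ℤ)+t-1 := by omega
      calc ((m:ℤ)+t-1)*(2*c0+1)+c0+1 = ((m-1+t : ℕ):ℤ)*(2*c0+1)+c0+1 := by rw [e]
        _ ≤ (b:ℤ) := by exact_mod_cast hA2
    obtain ⟨h1, h2⟩ := lemKeyZ a b c0 m t (by exact_mod_cast ha) (by exact_mod_cast hm1)
      (by exact_mod_cast hm2) (by positivity) (by positivity) hmainZ hA2Z
    have h1' : a + 1 ≤ m + t := by exact_mod_cast h1
    refine ⟨c0+1, m+t-1-a, ?_, ?_⟩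
    · have e : ((m+t-1-a : ℕ):ℤ) = (m:ℤ)+t-1-a := by omega
      have : (b:ℤ) ≤ ((m+t-1-a : ℕ):ℤ)*(2*(c0+1)+1)+(c0+1) := by
        rw [e]
        calc (b:ℤ) ≤ ((m:ℤ)+t-1-a)*(2*c0+3)+c0+1 := h2
          _ = ((m:ℤ)+t-1-a)*(2*(c0+1)+1)+(c0+1) := by ring
      exact_mod_cast this
    · have e : a*(c0+1) = a*c0 + a := by ring
      omega
/-- There are no balanced super-spiders: for all integers `α ≥ 3` and `β ≥ 1`,
`th₊(T_{α,β}) ≤ th₊(P_{αβ+1})`. -/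
theorem stmt19 (α β : ℕ) (hα : 3 ≤ α) (hβ : 1 ≤ β) :
    psdTh (balancedSpider α β) ≤ psdTh (SimpleGraph.pathGraph (α * β + 1)) := by
  have hne : {k | ∃ B : Finset (Fin (α*β+1)), IsPSDForcing (pathGraph (α*β+1)) ↑B ∧
      k = B.card + psdPt (pathGraph (α*β+1)) ↑B}.Nonempty := by
    refine ⟨_, Finset.univ, ⟨0, ?_⟩, rfl⟩
    simp
  refine le_csInf hne ?_
  rintro K ⟨Bp, hforce, rfl⟩
  have hset : {t | (psdStep (pathGraph (α*β+1)))^[t] (Bp : Set (Fin (α*β+1))) = Set.univ}.Nonempty :=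
    hforce
  have ht0 : (psdStep (pathGraph (α*β+1)))^[psdPt (pathGraph (α*β+1)) ↑Bp]
      (Bp : Set (Fin (α*β+1))) = Set.univ := Nat.sInf_mem hset
  have hcount := path_count Bp _ ht0
  have hk1 : 1 ≤ Bp.card := by
    rcases Nat.eq_zero_or_pos Bp.card with h | h
    · rw [h] at hcount; simp at hcount
    · exact h
  obtain ⟨c, s, hcov, hcost⟩ := lemArithNat α β Bp.card (psdPt (pathGraph (α*β+1)) ↑Bp) hα hβ hk1 hcount
  exact (spider_th_le α β hβ c s hcov).trans (by omega)
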